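/- Every positive semidefinite Hermitian matrix Q that is sparse with respect to a chordal graph Γ with maximal cliques C₁,…,C_p can be decomposed as Q = ∑_{k=1}^p Q_k, where each Q_k is positive semidefinite and the nonzero entries of Q_k lie only in rows and columns indexed by the clique C_k. -/

import Mathlib

set_option linter.unusedSectionVars false
set_option linter.unusedVariables false

open scoped BigOperators ComplexOrder


/-- A graph is chordal if every cycle of length at least four has a chord. -/
def IsChordal {V : Type*} (Γ : SimpleGraph V) : Prop :=
  ∀ ⦃v : V⦄ (w : Γ.Walk v v), w.IsCycle → 4 ≤ w.length →
    ∃ i j : ℕ, i + 2 ≤ j ∧ j < w.length ∧ ¬(i = 0 ∧ j + 1 = w.length) ∧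
      Γ.Adj (w.getVert i) (w.getVert j)

namespace ChordalAux

variable {V : Type*}

open SimpleGraph Walk

@[simp] lemma getVert_nil {G : SimpleGraph V} {u : V} (n : ℕ) :
    (Walk.nil : G.Walk u u).getVert n = u := rfl

lemma getVert_mem_support {G : SimpleGraph V} {u v : V} (p : G.Walk u v) {i : ℕ}
    (hi : i ≤ p.length) : p.getVert i ∈ p.support :=
  Walk.mem_support_iff_exists_getVert.2 ⟨i, rfl, hi⟩

/-- Initial segment of a walk. -/
def takeN {G : SimpleGraph V} : ∀ {u v : V} (p : G.Walk u v) (n : ℕ), G.Walk u (p.getVert n)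
  | _, _, .nil, _ => .nil
  | _, _, .cons _ _, 0 => .nil
  | _, _, .cons h p, (n+1) => .cons h (takeN p n)

/-- Final segment of a walk. -/
def dropN {G : SimpleGraph V} : ∀ {u v : V} (p : G.Walk u v) (n : ℕ), G.Walk (p.getVert n) v
  | _, _, .nil, _ => .nil
  | _, _, .cons h p, 0 => .cons h p
  | _, _, .cons _ p, (n+1) => dropN p n

lemma length_takeN {G : SimpleGraph V} : ∀ {u v : V} (p : G.Walk u v) (n : ℕ), n ≤ p.length →
    (takeN p n).length = n
  | _, _, .nil, 0, _ => rfl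
  | _, _, .cons _ _, 0, _ => rfl
  | _, _, .cons h p, (n+1), hn => by
      simpa [takeN] using length_takeN p n (by simpa using hn)

lemma length_dropN {G : SimpleGraph V} : ∀ {u v : V} (p : G.Walk u v) (n : ℕ),
    (dropN p n).length = p.length - n
  | _, _, .nil, _ => by simp [dropN]
  | _, _, .cons _ _, 0 => by simp [dropN]; rfl
  | _, _, .cons h p, (n+1) => by
      simpa [dropN] using length_dropN p n

lemma support_takeN {G : SimpleGraph V} : ∀ {u v : V} (p : G.Walk u v) (n : ℕ),
    ∀ z ∈ (takeN p n).support, z ∈ p.support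
  | _, _, .nil, _ => by simp [takeN]
  | _, _, .cons _ _, 0 => fun z hz => by
      rw [List.mem_singleton.1 hz]; exact Walk.start_mem_support _
  | _, _, .cons h p, (n+1) => by
      intro z hz
      rcases List.mem_cons.1 (by simpa [takeN] using hz) with h1 | h1
      · simp [h1]
      · simp [support_takeN p n z h1]

lemma support_dropN {G : SimpleGraph V} : ∀ {u v : V} (p : G.Walk u v) (n : ℕ),
    ∀ z ∈ (dropN p n).support, z ∈ p.support
  | _, _, .nil, _ => by simp [dropN]
  | _, _, .cons _ _, 0 => fun z hz => hz
  | _, _, .cons h p, (n+1) => by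
      intro z hz
      simp [support_dropN p n z (by simpa [dropN] using hz)]

/-- Shortcut a walk along a chord. -/
lemma exists_shorter {G : SimpleGraph V} {u v : V} (p : G.Walk u v) {i j : ℕ}
    (hij : i + 2 ≤ j) (hj : j ≤ p.length) (hadj : G.Adj (p.getVert i) (p.getVert j)) :
    ∃ q : G.Walk u v, q.length < p.length ∧ ∀ z ∈ q.support, z ∈ p.support := by
  refine ⟨(takeN p i).append (Walk.cons hadj (dropN p j)), ?_, ?_⟩
  · rw [Walk.length_append, Walk.length_cons, length_takeN p i (by omega), length_dropN]
    omega
  · intro z hz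
    rw [Walk.mem_support_append_iff] at hz
    rcases hz with hz | hz
    · exact support_takeN p i z hz
    · rcases List.mem_cons.1 (by simpa using hz) with h1 | h1
      · rw [h1]; exact getVert_mem_support p (le_trans (by omega) hj)
      · exact support_dropN p j z h1

/-- Reachability through a prescribed set of vertices. -/
def ReachIn (Γ : SimpleGraph V) (X : Set V) (u v : V) : Prop :=
  ∃ p : Γ.Walk u v, ∀ z ∈ p.support, z ∈ X

variable {Γ : SimpleGraph V} {X Y : Set V} {u v w : V}

lemma ReachIn.refl (hu : u ∈ X) : ReachIn Γ X u u := ⟨.nil, by simpa using hu⟩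

lemma ReachIn.symm (h : ReachIn Γ X u v) : ReachIn Γ X v u := by
  obtain ⟨p, hp⟩ := h
  exact ⟨p.reverse, fun z hz => hp z (by simpa [Walk.support_reverse] using hz)⟩

lemma ReachIn.trans (h : ReachIn Γ X u v) (h' : ReachIn Γ X v w) : ReachIn Γ X u w := by
  obtain ⟨p, hp⟩ := h
  obtain ⟨q, hq⟩ := h'
  refine ⟨p.append q, fun z hz => ?_⟩
  rcases (Walk.mem_support_append_iff _ _).1 hz with h1 | h1
  · exact hp z h1
  · exact hq z h1

lemma ReachIn.mem_left (h : ReachIn Γ X u v) : u ∈ X := by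
  obtain ⟨p, hp⟩ := h; exact hp u p.start_mem_support

lemma ReachIn.mem_right (h : ReachIn Γ X u v) : v ∈ X := by
  obtain ⟨p, hp⟩ := h; exact hp v p.end_mem_support

lemma ReachIn.adj (h : Γ.Adj u v) (hu : u ∈ X) (hv : v ∈ X) : ReachIn Γ X u v := by
  refine ⟨.cons h .nil, fun z hz => ?_⟩
  rcases by simpa using hz with rfl | rfl <;> assumption

lemma ReachIn.mono (hXY : X ⊆ Y) (h : ReachIn Γ X u v) : ReachIn Γ Y u v := by
  obtain ⟨p, hp⟩ := h; exact ⟨p, fun z hz => hXY (hp z hz)⟩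

/-- Every vertex on a witnessing walk is reachable. -/
lemma ReachIn.of_mem_support (p : Γ.Walk u v) (hp : ∀ z ∈ p.support, z ∈ X)
    (hz : w ∈ p.support) : ReachIn Γ X u w := by
  classical
  exact ⟨p.takeUntil w hz, fun z h => hp z (Walk.support_takeUntil_subset _ _ h)⟩

/-- There is no walk from `a` to `b` staying inside `{a, b}` when `a ≠ b` are not adjacent. -/
lemma not_reachIn_pair (hab : u ≠ v) (hadj : ¬Γ.Adj u v) :
    ¬ReachIn Γ {u, v} u v := by
  rintro ⟨p, hp⟩
  cases p with
  | nil => exact hab rfl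
  | cons h q =>
    rename_i z
    have hz : z ∈ ({u, v} : Set V) := hp z (by simp)
    rcases hz with rfl | rfl
    · exact Γ.irrefl h
    · exact hadj h

/-- A minimum-length path subject to a support constraint. -/
lemma exists_min_path (h : ReachIn Γ X u v) :
    ∃ p : Γ.Walk u v, (∀ z ∈ p.support, z ∈ X) ∧ p.IsPath ∧
      ∀ q : Γ.Walk u v, (∀ z ∈ q.support, z ∈ X) → p.length ≤ q.length := by
  classical
  have hset : ∃ n, ∃ p : Γ.Walk u v, p.length = n ∧ ∀ z ∈ p.support, z ∈ X := by
    obtain ⟨p, hp⟩ := h; exact ⟨p.length, p, rfl, hp⟩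
  obtain ⟨n, ⟨p, hlen, hp⟩, hmin⟩ := Nat.lt_wfRel.wf.has_min _ hset
  refine ⟨p.bypass, fun z hz => hp z (Walk.support_bypass_subset _ hz), p.bypass_isPath, ?_⟩
  intro q hq
  have h1 : p.bypass.length ≤ p.length := Walk.length_bypass_le _
  have h2 : ¬q.length < n := fun hlt => hmin q.length ⟨q, rfl, hq⟩ hlt
  omega

/-- `getVert` is injective on paths. -/
lemma IsPath.getVert_inj {p : Γ.Walk u v} (hp : p.IsPath) {i j : ℕ}
    (hi : i ≤ p.length) (hj : j ≤ p.length) (h : p.getVert i = p.getVert j) : i = j := by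
  induction p generalizing i j with
  | nil => simp_all
  | cons ha q ih =>
    rename_i x y z
    rcases Nat.eq_zero_or_pos i with rfl | hi0
    · rcases Nat.eq_zero_or_pos j with rfl | hj0
      · rfl
      · exfalso
        obtain ⟨j, rfl⟩ := Nat.exists_eq_add_of_lt hj0
        rw [Walk.getVert_zero, Walk.getVert_cons_succ] at h
        have : x ∈ q.support := h ▸ getVert_mem_support q (by simpa using hj)
        exact ((Walk.cons_isPath_iff _ _).1 hp).2 this
    · rcases Nat.eq_zero_or_pos j with rfl | hj0
      · exfalso
        obtain ⟨i, rfl⟩ := Nat.exists_eq_add_of_lt hi0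
        rw [Walk.getVert_zero, Walk.getVert_cons_succ] at h
        have : x ∈ q.support := h ▸ getVert_mem_support q (by simpa using hi)
        exact ((Walk.cons_isPath_iff _ _).1 hp).2 this
      · obtain ⟨i, rfl⟩ := Nat.exists_eq_add_of_lt hi0
        obtain ⟨j, rfl⟩ := Nat.exists_eq_add_of_lt hj0
        rw [Walk.getVert_cons_succ, Walk.getVert_cons_succ] at h
        have := ih ((Walk.cons_isPath_iff _ _).1 hp).1 (by simpa using hi) (by simpa using hj) h
        omega

/-- Given two vertex sets `A`, `B` with no edges between them, if `x ≠ y` are joined by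
paths through `A` and through `B`, then chordality forces `x` and `y` to be adjacent. -/
lemma adj_of_two_sides {Γ : SimpleGraph V} (hΓ : IsChordal Γ) {x y : V} {A B : Set V}
    (hxy : x ≠ y)
    (hAB : ∀ u ∈ A, ∀ v ∈ B, ¬Γ.Adj u v) (hABd : ∀ z, z ∈ A → z ∈ B → False)
    (hxA : x ∉ A) (hyA : y ∉ A) (hxB : x ∉ B) (hyB : y ∉ B)
    (hconnA : ReachIn Γ (insert x (insert y A)) x y)
    (hconnB : ReachIn Γ (insert x (insert y B)) x y) :
    Γ.Adj x y := by
  by_contra hnadj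
  obtain ⟨p, hpX, hpP, hpmin⟩ := exists_min_path hconnA
  obtain ⟨q, hqX, hqP, hqmin⟩ := exists_min_path hconnB.symm
  -- q : y → x, support in insert x (insert y B)
  set L := p.length with hL
  set M := q.length with hM
  have hKAB : ∀ z, z ∈ insert x (insert y A) → z ∈ insert x (insert y B) → z = x ∨ z = y := by
    rintro z (rfl | rfl | hz) hz'
    · exact Or.inl rfl
    · exact Or.inr rfl
    · rcases hz' with rfl | rfl | hz'
      · exact absurd hz hxA
      · exact absurd hz hyA
      · exact absurd (hABd z hz hz') not_false
  have hp2 : 2 ≤ L := by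
    rcases Nat.lt_or_ge L 2 with h | h
    · exfalso
      interval_cases h' : L
      · exact hxy (Walk.eq_of_length_eq_zero h')
      · have := p.adj_getVert_succ (by omega : 0 < p.length)
        rw [Walk.getVert_zero] at this
        have h1 : p.getVert 1 = y := by
          rw [show (1:ℕ) = p.length by omega]; exact p.getVert_length
        rw [h1] at this
        exact hnadj this
    · exact h
  have hq2 : 2 ≤ M := by
    rcases Nat.lt_or_ge M 2 with h | h
    · exfalso
      interval_cases h' : M
      · exact hxy (Walk.eq_of_length_eq_zero h').symm
      · have := q.adj_getVert_succ (by omega : 0 < q.length)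
        rw [Walk.getVert_zero] at this
        have h1 : q.getVert 1 = x := by
          rw [show (1:ℕ) = q.length by omega]; exact q.getVert_length
        rw [h1] at this
        exact hnadj this.symm
    · exact h
  -- interior vertices
  have hpint : ∀ i, 0 < i → i < L → p.getVert i ∈ A := by
    intro i h0 hiL
    have hmem := hpX _ (getVert_mem_support p (le_of_lt hiL))
    rcases hmem with hx | hy | hA'
    · have := IsPath.getVert_inj hpP (j := 0) (le_of_lt hiL) (Nat.zero_le _)
        (by rw [hx, Walk.getVert_zero])
      omega
    · have := IsPath.getVert_inj hpP (j := p.length) (le_of_lt hiL) le_rfl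
        (by rw [hy, Walk.getVert_length])
      omega
    · exact hA'
  have hqint : ∀ i, 0 < i → i < M → q.getVert i ∈ B := by
    intro i h0 hiM
    have hmem := hqX _ (getVert_mem_support q (le_of_lt hiM))
    rcases hmem with hx | hy | hB'
    · have := IsPath.getVert_inj hqP (j := q.length) (le_of_lt hiM) le_rfl
        (by rw [hx, Walk.getVert_length])
      omega
    · have := IsPath.getVert_inj hqP (j := 0) (le_of_lt hiM) (Nat.zero_le _)
        (by rw [hy, Walk.getVert_zero])
      omega
    · exact hB'
  -- the cycle
  set c : Γ.Walk x x := p.append q with hc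
  have hclen : c.length = L + M := by rw [hc, Walk.length_append]
  have hcyc : c.IsCycle := by
    rw [Walk.isCycle_def]
    refine ⟨⟨?_⟩, ?_, ?_⟩
    · -- edges nodup
      rw [hc, Walk.edges_append, List.nodup_append]
      refine ⟨hpP.isTrail.edges_nodup, hqP.isTrail.edges_nodup, ?_⟩
      intro e hep e' heq hee
      subst hee
      induction e with
      | h u' v' =>
        have hadj : Γ.Adj u' v' := Walk.adj_of_mem_edges p hep
        have hu'p : u' ∈ p.support := Walk.fst_mem_support_of_mem_edges p hep
        have hv'p : v' ∈ p.support := Walk.snd_mem_support_of_mem_edges p hep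
        have hu'q : u' ∈ q.support := Walk.fst_mem_support_of_mem_edges q heq
        have hv'q : v' ∈ q.support := Walk.snd_mem_support_of_mem_edges q heq
        rcases hKAB u' (hpX _ hu'p) (hqX _ hu'q) with rfl | rfl <;>
          rcases hKAB v' (hpX _ hv'p) (hqX _ hv'q) with rfl | rfl
        · exact Γ.irrefl hadj
        · exact hnadj hadj
        · exact hnadj hadj.symm
        · exact Γ.irrefl hadj
    · -- not nil
      intro hnil
      have : c.length = 0 := by rw [hnil]; rfl
      omega
    · -- support tail nodup
      have hsupp : c.support.tail = p.support.tail ++ q.support.tail := by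
        rw [hc, Walk.support_append, Walk.support_eq_cons p]
        rfl
      rw [hsupp, List.nodup_append]
      have hptail : p.support.Nodup := hpP.support_nodup
      have hqtail : q.support.Nodup := hqP.support_nodup
      have hpx : x ∉ p.support.tail := by
        rw [Walk.support_eq_cons p] at hptail
        exact (List.nodup_cons.1 hptail).1
      have hqy : y ∉ q.support.tail := by
        rw [Walk.support_eq_cons q] at hqtail
        exact (List.nodup_cons.1 hqtail).1
      refine ⟨?_, ?_, ?_⟩
      · rw [Walk.support_eq_cons p] at hptail
        exact (List.nodup_cons.1 hptail).2
      · rw [Walk.support_eq_cons q] at hqtail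
        exact (List.nodup_cons.1 hqtail).2
      · intro z hzp z' hzq hzz
        subst hzz
        have hz1 : z ∈ insert x (insert y A) := hpX _ (List.tail_subset _ hzp)
        have hz2 : z ∈ insert x (insert y B) := hqX _ (List.tail_subset _ hzq)
        rcases hKAB z hz1 hz2 with rfl | rfl
        · exact hpx hzp
        · exact hqy hzq
  obtain ⟨i, j, hij, hjlt, hnotend, hadj⟩ := hΓ c hcyc (by omega)
  rw [hclen] at hjlt
  have cgvP : ∀ k, k ≤ L → c.getVert k = p.getVert k := by
    intro k hk
    rw [hc, Walk.getVert_append]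
    rcases Nat.lt_or_ge k L with h | h
    · rw [if_pos h]
    · have : k = L := le_antisymm hk h
      subst this
      rw [if_neg (lt_irrefl _), Nat.sub_self, Walk.getVert_zero, Walk.getVert_length]
  have cgvQ : ∀ k, L ≤ k → c.getVert k = q.getVert (k - L) := by
    intro k hk
    rw [hc, Walk.getVert_append, if_neg (by omega)]
  rcases le_or_gt j L with hjL | hjL
  · -- chord within p
    rw [cgvP i (by omega), cgvP j hjL] at hadj
    obtain ⟨r, hrlen, hrsupp⟩ := exists_shorter p hij hjL hadj
    exact absurd (hpmin r (fun z hz => hpX z (hrsupp z hz))) (by omega)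
  · have hjM : j - L < M := by omega
    rcases Nat.lt_or_ge i L with hiL | hiL
    · rcases Nat.eq_zero_or_pos i with rfl | hi0
      · -- i = 0 : chord from x into the interior of q
        rw [cgvQ j (by omega)] at hadj
        have hgx : c.getVert 0 = x := Walk.getVert_zero c
        rw [hgx] at hadj
        have hjM2 : (j - L) + 2 ≤ M := by
          rcases Nat.lt_or_ge (j+1) (L+M) with h | h
          · omega
          · exact absurd ⟨rfl, by omega⟩ hnotend
        have hadj' : Γ.Adj (q.getVert (j - L)) (q.getVert M) := by
          rw [Walk.getVert_length q]; exact hadj.symm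
        obtain ⟨r, hrlen, hrsupp⟩ := exists_shorter q hjM2 le_rfl hadj'
        exact absurd (hqmin r (fun z hz => hqX z (hrsupp z hz))) (by omega)
      · -- 0 < i < L : edge between A and B
        rw [cgvP i (le_of_lt hiL), cgvQ j (by omega)] at hadj
        exact hAB _ (hpint i hi0 hiL) _ (hqint (j - L) (by omega) hjM) hadj
    · -- chord within q
      rw [cgvQ i hiL, cgvQ j (by omega)] at hadj
      obtain ⟨r, hrlen, hrsupp⟩ := exists_shorter q (by omega : (i - L) + 2 ≤ j - L)
        (by omega) hadj
      exact absurd (hqmin r (fun z hz => hqX z (hrsupp z hz))) (by omega)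


/-- If adding `x` to the allowed set makes `b` reachable from `a`, then `x` has a neighbor
reachable from `a` inside the original set. -/
lemma exists_adj_reach {Γ : SimpleGraph V} {X : Set V} {x a b : V} (hxa : x ≠ a)
    (hsep : ¬ReachIn Γ X a b) (h : ReachIn Γ (insert x X) a b) :
    ∃ y, Γ.Adj x y ∧ ReachIn Γ X a y := by
  classical
  obtain ⟨p, hp⟩ := h
  have hx : x ∈ p.support := by
    by_contra hx
    exact hsep ⟨p, fun z hz => ((hp z hz).resolve_left (fun h' => hx (h' ▸ hz)))⟩
  have hcount : (p.takeUntil x hx).support.count x = 1 :=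
    p.count_support_takeUntil_eq_one hx
  cases hqr : (p.takeUntil x hx).reverse with
  | nil => exact absurd rfl hxa
  | cons hadj r =>
    rename_i y
    have hsupp : (p.takeUntil x hx).support.reverse = x :: r.support := by
      rw [← Walk.support_reverse, hqr, Walk.support_cons]
    have hxr : x ∉ r.support := by
      have h1 : ((p.takeUntil x hx).support.reverse).count x = 1 := by
        rw [List.count_reverse]; exact hcount
      rw [hsupp] at h1
      simp only [List.count_cons_self] at h1
      exact List.count_eq_zero.1 (by omega)
    have hrX : ∀ z ∈ r.support, z ∈ X := by
      intro z hz
      have hz1 : z ∈ (p.takeUntil x hx).support := by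
        rw [← List.mem_reverse, hsupp]; exact List.mem_cons_of_mem _ hz
      have hz2 : z ∈ insert x X := hp z (Walk.support_takeUntil_subset p hx hz1)
      rcases hz2 with rfl | hz2
      · exact absurd hz hxr
      · exact hz2
    exact ⟨y, hadj, (ReachIn.symm ⟨r, hrX⟩).symm.symm⟩

/-- Walks between points of the same "component" stay in the component. -/
lemma reach_in_component {Γ : SimpleGraph V} {X : Set V} {a u v : V}
    (hu : ReachIn Γ X a u) (hv : ReachIn Γ X a v) :
    ReachIn Γ {z | z ∈ X ∧ ReachIn Γ X a z} u v := by
  obtain ⟨p, hp⟩ := hu.symm.trans hv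
  exact ⟨p, fun z hz => ⟨hp z hz, hu.trans (ReachIn.of_mem_support p hp hz)⟩⟩

/-- `v` is simplicial relative to `s`. -/
def SimpIn (Γ : SimpleGraph V) (s : Finset V) (v : V) : Prop :=
  ∀ u w, u ∈ s → w ∈ s → Γ.Adj v u → Γ.Adj v w → u ≠ w → Γ.Adj u w

lemma side_simp [DecidableEq V] {Γ : SimpleGraph V} {n : ℕ}
    (IH : ∀ s' : Finset V, s'.card ≤ n → ∀ T' : Finset V, T' ⊆ s' → Γ.IsClique ↑T' →
      (s' \ T').Nonempty → ∃ v ∈ s' \ T', SimpIn Γ s' v)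
    {s S : Finset V} {a b : V} (hs : s.card ≤ n + 1)
    (ha : a ∈ s) (hb : b ∈ s) (haS : a ∉ S) (hbS : b ∉ S) (hSs : S ⊆ s)
    (hsep : ¬ReachIn Γ (↑(s \ S) : Set V) a b) (hSclique : Γ.IsClique (↑S : Set V)) :
    ∃ v, ReachIn Γ (↑(s \ S) : Set V) a v ∧ SimpIn Γ s v := by
  classical
  set A : Finset V := (s \ S).filter (fun u => ReachIn Γ (↑(s \ S) : Set V) a u) with hA
  set s' : Finset V := A ∪ S with hs'
  have haA : a ∈ A := by
    rw [hA]
    refine Finset.mem_filter.2 ⟨Finset.mem_sdiff.2 ⟨ha, haS⟩, ReachIn.refl ?_⟩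
    simp [Finset.mem_sdiff, ha, haS]
  have hbA : b ∉ A := by
    rw [hA]
    intro hbA
    exact hsep (Finset.mem_filter.1 hbA).2
  have hb's : b ∉ s' := by
    rw [hs']
    simp only [Finset.mem_union, not_or]
    exact ⟨hbA, hbS⟩
  have hs's : s' ⊆ s := by
    rw [hs']
    refine Finset.union_subset ?_ hSs
    rw [hA]; exact (Finset.filter_subset _ _).trans (Finset.sdiff_subset)
  have hcard : s'.card ≤ n := by
    have h1 : s' ⊆ s.erase b := fun z hz =>
      Finset.mem_erase.2 ⟨fun h => hb's (h ▸ hz), hs's hz⟩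
    have h2 := Finset.card_le_card h1
    have h3 := Finset.card_erase_of_mem hb
    omega
  have hSsub : S ⊆ s' := by rw [hs']; exact Finset.subset_union_right
  have hAS : ∀ z ∈ A, z ∉ S := by
    intro z hz
    rw [hA] at hz
    exact (Finset.mem_sdiff.1 (Finset.mem_filter.1 hz).1).2
  have hne : (s' \ S).Nonempty := by
    refine ⟨a, Finset.mem_sdiff.2 ⟨?_, haS⟩⟩
    rw [hs']
    exact Finset.mem_union_left _ haA
  obtain ⟨v, hv, hvsimp⟩ := IH s' hcard S hSsub hSclique hne
  have hvA : v ∈ A := by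
    have h0 := (Finset.mem_sdiff.1 hv).1
    rw [hs', Finset.mem_union] at h0
    rcases h0 with h | h
    · exact h
    · exact absurd h (Finset.mem_sdiff.1 hv).2
  have hvreach : ReachIn Γ (↑(s \ S) : Set V) a v := (Finset.mem_filter.1 (hA ▸ hvA)).2
  refine ⟨v, hvreach, ?_⟩
  intro u w hu hw hvu hvw hne'
  have key : ∀ z, z ∈ s → Γ.Adj v z → z ∈ s' := by
    intro z hz hadj
    by_cases hzS : z ∈ S
    · exact hSsub hzS
    · have hz1 : z ∈ (↑(s \ S) : Set V) := by simp [Finset.mem_sdiff, hz, hzS]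
      have hv1 : v ∈ (↑(s \ S) : Set V) := by
        have := hAS v hvA
        have hvs := hs's (Finset.mem_union_left _ hvA)
        simp [Finset.mem_sdiff, hvs, this]
      have : ReachIn Γ (↑(s \ S) : Set V) a z :=
        hvreach.trans (ReachIn.adj hadj hv1 hz1)
      exact Finset.mem_union_left _ (Finset.mem_filter.2 ⟨by simpa using hz1, this⟩)
  exact hvsimp u w (key u hu hvu) (key w hw hvw) hvu hvw hne'

/-- Dirac: a finite chordal graph has a simplicial vertex outside any given clique. -/
lemma diracAux [DecidableEq V] {Γ : SimpleGraph V} (hΓ : IsChordal Γ) :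
    ∀ (n : ℕ) (s : Finset V), s.card ≤ n → ∀ T : Finset V, T ⊆ s → Γ.IsClique (↑T : Set V) →
      (s \ T).Nonempty → ∃ v ∈ s \ T, SimpIn Γ s v := by
  classical
  intro n
  induction n with
  | zero =>
    intro s hs T _ _ hne
    rw [Nat.le_zero, Finset.card_eq_zero] at hs
    subst hs
    obtain ⟨v, hv⟩ := hne
    exact absurd (Finset.mem_sdiff.1 hv).1 (Finset.notMem_empty v)
  | succ n IH =>
    intro s hs T hTs hTclique hne
    by_cases hcomplete : ∀ u ∈ s, ∀ w ∈ s, u ≠ w → Γ.Adj u w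
    · obtain ⟨v, hv⟩ := hne
      exact ⟨v, hv, fun u w hu hw _ _ hne' => hcomplete u hu w hw hne'⟩
    push_neg at hcomplete
    obtain ⟨a, ha, b, hb, hab, hnadj⟩ := hcomplete
    -- find a minimum-cardinality separator S
    have hW0 : ¬ReachIn Γ (↑(s \ ((s.erase a).erase b)) : Set V) a b := by
      intro h
      refine not_reachIn_pair hab hnadj (h.mono ?_)
      intro z hz
      simp only [Finset.coe_sdiff, Set.mem_diff, Finset.mem_coe, Finset.mem_erase] at hz
      obtain ⟨hzs, hz2⟩ := hz
      by_cases h1 : z = a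
      · exact Or.inl h1
      · by_cases h2 : z = b
        · exact Or.inr h2
        · exact absurd ⟨h2, h1, hzs⟩ hz2
    obtain ⟨S, hSmem, hSmin⟩ := Finset.exists_min_image
      (((s.erase a).erase b).powerset.filter
        (fun W => ¬ReachIn Γ (↑(s \ W) : Set V) a b))
      Finset.card
      ⟨(s.erase a).erase b, Finset.mem_filter.2 ⟨Finset.mem_powerset_self _, hW0⟩⟩
    rw [Finset.mem_filter, Finset.mem_powerset] at hSmem
    obtain ⟨hSsub, hsep⟩ := hSmem
    have haS : a ∉ S := fun h => (Finset.mem_erase.1 (Finset.mem_erase.1 (hSsub h)).2).1 rfl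
    have hbS : b ∉ S := fun h => (Finset.mem_erase.1 (hSsub h)).1 rfl
    have hSs : S ⊆ s := hSsub.trans ((Finset.erase_subset _ _).trans (Finset.erase_subset _ _))
    have hsep' : ¬ReachIn Γ (↑(s \ S) : Set V) b a := fun h => hsep h.symm
    -- minimality: erasing any x from S restores reachability
    have hminx : ∀ x ∈ S, ReachIn Γ (insert x (↑(s \ S) : Set V)) a b := by
      intro x hx
      have h1 : S.erase x ∈ ((s.erase a).erase b).powerset.filter
          (fun W => ¬ReachIn Γ (↑(s \ W) : Set V) a b) → False := by
        intro h
        have := hSmin _ h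
        have hcard := Finset.card_erase_of_mem hx
        have hpos : 0 < S.card := Finset.card_pos.2 ⟨x, hx⟩
        omega
      by_contra hcon
      apply h1
      rw [Finset.mem_filter, Finset.mem_powerset]
      refine ⟨(Finset.erase_subset _ _).trans hSsub, fun hr => hcon (hr.mono ?_)⟩
      intro z hz
      simp only [Finset.coe_sdiff, Set.mem_diff, Finset.mem_coe, Finset.mem_erase] at hz
      obtain ⟨hzs, hz2⟩ := hz
      by_cases hzx : z = x
      · exact Or.inl hzx
      · refine Or.inr ?_
        simp only [Finset.coe_sdiff, Set.mem_diff, Finset.mem_coe]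
        exact ⟨hzs, fun hzS => hz2 ⟨hzx, hzS⟩⟩
    have hnbr : ∀ x ∈ S, (∃ y, Γ.Adj x y ∧ ReachIn Γ (↑(s \ S) : Set V) a y) ∧
        (∃ y, Γ.Adj x y ∧ ReachIn Γ (↑(s \ S) : Set V) b y) := by
      intro x hx
      have hxa : x ≠ a := fun h => haS (h ▸ hx)
      have hxb : x ≠ b := fun h => hbS (h ▸ hx)
      exact ⟨exists_adj_reach hxa hsep (hminx x hx),
        exists_adj_reach hxb hsep' ((hminx x hx).symm)⟩
    -- S is a clique
    have hSclique : Γ.IsClique (↑S : Set V) := by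
      rw [SimpleGraph.isClique_iff]
      intro x hx y hy hxy
      have hxS : x ∈ S := hx
      have hyS : y ∈ S := hy
      set X : Set V := (↑(s \ S) : Set V) with hX
      set Aset : Set V := {z | z ∈ X ∧ ReachIn Γ X a z} with hAset
      set Bset : Set V := {z | z ∈ X ∧ ReachIn Γ X b z} with hBset
      have hnotinA : ∀ w ∈ S, w ∉ Aset := by
        intro w hw hwA
        have := hwA.1
        rw [hX] at this
        simp only [Finset.coe_sdiff, Set.mem_diff, Finset.mem_coe] at this
        exact this.2 hw
      have hnotinB : ∀ w ∈ S, w ∉ Bset := by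
        intro w hw hwB
        have := hwB.1
        rw [hX] at this
        simp only [Finset.coe_sdiff, Set.mem_diff, Finset.mem_coe] at this
        exact this.2 hw
      have hABd : ∀ z, z ∈ Aset → z ∈ Bset → False :=
        fun z hzA hzB => hsep (hzA.2.trans hzB.2.symm)
      have hAB : ∀ u ∈ Aset, ∀ v ∈ Bset, ¬Γ.Adj u v := by
        intro u hu v hv hadj
        exact hABd v ⟨hv.1, hu.2.trans (ReachIn.adj hadj hu.1 hv.1)⟩ hv
      obtain ⟨⟨ax, haxadj, haxr⟩, ⟨bx, hbxadj, hbxr⟩⟩ := hnbr x hxS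
      obtain ⟨⟨ay, hayadj, hayr⟩, ⟨by', hbyadj, hbyr⟩⟩ := hnbr y hyS
      have haxA : ax ∈ Aset := ⟨haxr.mem_right, haxr⟩
      have hayA : ay ∈ Aset := ⟨hayr.mem_right, hayr⟩
      have hbxB : bx ∈ Bset := ⟨hbxr.mem_right, hbxr⟩
      have hbyB : by' ∈ Bset := ⟨hbyr.mem_right, hbyr⟩
      have hsubA : Aset ⊆ insert x (insert y Aset) :=
        fun z hz => Set.mem_insert_iff.2 (Or.inr (Set.mem_insert_iff.2 (Or.inr hz)))
      have hsubB : Bset ⊆ insert x (insert y Bset) :=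
        fun z hz => Set.mem_insert_iff.2 (Or.inr (Set.mem_insert_iff.2 (Or.inr hz)))
      have hconnA : ReachIn Γ (insert x (insert y Aset)) x y := by
        refine ((ReachIn.adj haxadj (Set.mem_insert _ _) (hsubA haxA)).trans
          ((reach_in_component haxr hayr).mono hsubA)).trans
          (ReachIn.adj hayadj.symm (hsubA hayA) ?_)
        exact Set.mem_insert_iff.2 (Or.inr (Set.mem_insert _ _))
      have hconnB : ReachIn Γ (insert x (insert y Bset)) x y := by
        refine ((ReachIn.adj hbxadj (Set.mem_insert _ _) (hsubB hbxB)).trans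
          ((reach_in_component hbxr hbyr).mono hsubB)).trans
          (ReachIn.adj hbyadj.symm (hsubB hbyB) ?_)
        exact Set.mem_insert_iff.2 (Or.inr (Set.mem_insert _ _))
      exact adj_of_two_sides hΓ hxy hAB hABd (hnotinA x hxS) (hnotinA y hyS)
        (hnotinB x hxS) (hnotinB y hyS) hconnA hconnB
    -- T misses one of the two sides
    have hTside : (∀ t ∈ T, ¬ReachIn Γ (↑(s \ S) : Set V) a t) ∨
        (∀ t ∈ T, ¬ReachIn Γ (↑(s \ S) : Set V) b t) := by
      by_contra hcon
      push_neg at hcon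
      obtain ⟨⟨t1, ht1T, ht1r⟩, ⟨t2, ht2T, ht2r⟩⟩ := hcon
      by_cases h12 : t1 = t2
      · subst h12
        exact hsep (ht1r.trans ht2r.symm)
      · have hadj := hTclique ht1T ht2T h12
        exact hsep ((ht1r.trans
          (ReachIn.adj hadj ht1r.mem_right ht2r.mem_right)).trans ht2r.symm)
    rcases hTside with hmiss | hmiss
    · obtain ⟨v, hvreach, hvsimp⟩ := side_simp IH hs ha hb haS hbS hSs hsep hSclique
      refine ⟨v, Finset.mem_sdiff.2 ⟨?_, fun hvT => hmiss v hvT hvreach⟩, hvsimp⟩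
      have := hvreach.mem_right
      simp only [Finset.coe_sdiff, Set.mem_diff, Finset.mem_coe] at this
      exact this.1
    · obtain ⟨v, hvreach, hvsimp⟩ := side_simp IH hs hb ha hbS haS hSs hsep' hSclique
      refine ⟨v, Finset.mem_sdiff.2 ⟨?_, fun hvT => hmiss v hvT hvreach⟩, hvsimp⟩
      have := hvreach.mem_right
      simp only [Finset.coe_sdiff, Set.mem_diff, Finset.mem_coe] at this
      exact this.1


section MatrixPart

variable {V : Type*} [Fintype V] [DecidableEq V]

open Matrix

/-- single-vector quadratic form evaluates to the diagonal entry. -/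
lemma quad_single (Q : Matrix V V ℂ) (v : V) :
    star (Pi.single v 1) ⬝ᵥ Q *ᵥ (Pi.single v 1) = Q v v := by
  have h1 : star (Pi.single v 1 : V → ℂ) = Pi.single v 1 := by
    funext u
    by_cases h : u = v <;> simp [Pi.single_apply, h]
  rw [h1, Matrix.mulVec_single, single_dotProduct]
  simp

lemma diag_nonneg {Q : Matrix V V ℂ} (hQ : Q.PosSemidef) (v : V) : 0 ≤ Q v v := by
  have := hQ.dotProduct_mulVec_nonneg (Pi.single v 1)
  rwa [quad_single] at this

lemma col_eq_zero_of_diag_eq_zero {Q : Matrix V V ℂ} (hQ : Q.PosSemidef) {v : V}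
    (h : Q v v = 0) : ∀ u, Q u v = 0 := by
  have h0 : star (Pi.single v 1 : V → ℂ) ⬝ᵥ Q *ᵥ (Pi.single v 1) = 0 := by
    rwa [quad_single]
  have h1 := (hQ.dotProduct_mulVec_zero_iff _).1 h0
  rw [Matrix.mulVec_single] at h1
  intro u
  simpa using congrFun h1 u

lemma star_dot_col {Q : Matrix V V ℂ} (hH : Q.IsHermitian) (x : V → ℂ) (v : V) :
    (∑ u, star (x u) * Q u v) = star ((Q *ᵥ x) v) := by
  simp only [Matrix.mulVec, dotProduct, star_sum, star_mul', hH.apply]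
  exact Finset.sum_congr rfl fun u _ => mul_comm _ _

/-- Quadratic form of the rank-one matrix. -/
lemma quad_rank_one {Q : Matrix V V ℂ} (hH : Q.IsHermitian) (v : V) (x : V → ℂ) :
    star x ⬝ᵥ (Matrix.of fun u w => Q u v * Q v w * (Q v v)⁻¹) *ᵥ x
      = star ((Q *ᵥ x) v) * ((Q *ᵥ x) v) * (Q v v)⁻¹ := by
  have h1 : (Matrix.of fun u w => Q u v * Q v w * (Q v v)⁻¹) *ᵥ x
      = fun u => Q u v * (Q v v)⁻¹ * ((Q *ᵥ x) v) := by
    funext u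
    simp only [Matrix.mulVec, dotProduct, Matrix.of_apply]
    rw [Finset.mul_sum]
    refine Finset.sum_congr rfl fun w _ => by ring
  rw [h1]
  simp only [dotProduct, Pi.star_apply]
  rw [show (∑ u, star (x u) * (Q u v * (Q v v)⁻¹ * ((Q *ᵥ x) v)))
      = (∑ u, star (x u) * Q u v) * ((Q v v)⁻¹ * ((Q *ᵥ x) v)) by
    rw [Finset.sum_mul]; exact Finset.sum_congr rfl fun u _ => by ring]
  rw [star_dot_col hH x v]
  ring

lemma rank_one_hermitian {Q : Matrix V V ℂ} (hH : Q.IsHermitian) (v : V) :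
    (Matrix.of fun u w => Q u v * Q v w * (Q v v)⁻¹).IsHermitian := by
  refine Matrix.IsHermitian.ext fun u w => ?_
  simp only [Matrix.of_apply]
  rw [star_mul', star_mul', star_inv₀, hH.apply v w, hH.apply u v, hH.apply v v]
  ring

lemma quad_nonneg_aux {a s : ℂ} (ha : star a = a) (h0 : 0 ≤ a) (hne : a ≠ 0) :
    0 ≤ star s * s * a⁻¹ := by
  obtain ⟨r, hr⟩ : ∃ r : ℝ, a = (r : ℂ) := by
    refine ⟨a.re, ?_⟩
    exact (Complex.conj_eq_iff_re.1 ha).symm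
  have hr0 : 0 ≤ r := by
    rw [hr] at h0
    exact_mod_cast (Complex.zero_le_real).1 h0
  rw [hr, Complex.star_def, ← Complex.ofReal_inv]
  rw [show (starRingEnd ℂ) s * s = (Complex.normSq s : ℂ) by
    rw [mul_comm]; exact Complex.mul_conj s]
  rw [← Complex.ofReal_mul]
  exact Complex.zero_le_real.2 (mul_nonneg (Complex.normSq_nonneg s) (by positivity))

lemma rank_one_posSemidef {Q : Matrix V V ℂ} (hQ : Q.PosSemidef) (v : V)
    (ha : Q v v ≠ 0) :
    (Matrix.of fun u w => Q u v * Q v w * (Q v v)⁻¹).PosSemidef := by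
  refine .of_dotProduct_mulVec_nonneg (rank_one_hermitian hQ.1 v) fun x => ?_
  rw [quad_rank_one hQ.1 v x]
  exact quad_nonneg_aux (hQ.1.apply v v) (diag_nonneg hQ v) ha

lemma sub_rank_one_posSemidef {Q : Matrix V V ℂ} (hQ : Q.PosSemidef) (v : V)
    (ha : Q v v ≠ 0) :
    (Q - Matrix.of fun u w => Q u v * Q v w * (Q v v)⁻¹).PosSemidef := by
  have haa : star (Q v v) = Q v v := hQ.1.apply v v
  refine .of_dotProduct_mulVec_nonneg (hQ.1.sub (rank_one_hermitian hQ.1 v)) fun x => ?_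
  set s : ℂ := (Q *ᵥ x) v with hs
  set c : ℂ := s * (Q v v)⁻¹ with hc
  set y : V → ℂ := x - c • (Pi.single v 1 : V → ℂ) with hy
  have hsingle : star (Pi.single v 1 : V → ℂ) = Pi.single v 1 := by
    funext u
    by_cases h : u = v <;> simp [Pi.single_apply, h]
  have hQx : Q *ᵥ (Pi.single v 1) = fun u => Q u v := by
    funext u; simp [Matrix.mulVec_single]
  have key : star y ⬝ᵥ Q *ᵥ y = star x ⬝ᵥ Q *ᵥ x - star s * s * (Q v v)⁻¹ := by
    rw [hy]
    rw [Matrix.mulVec_sub, Matrix.mulVec_smul, hQx]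
    rw [star_sub, star_smul, hsingle]
    rw [dotProduct_sub, sub_dotProduct, sub_dotProduct]
    rw [smul_dotProduct, smul_dotProduct]
    rw [single_dotProduct, single_dotProduct]
    have e1 : star x ⬝ᵥ (c • fun u => Q u v) = c * star s := by
      rw [dotProduct_smul]
      have : star x ⬝ᵥ (fun u => Q u v) = star s := by
        simp only [dotProduct, Pi.star_apply]
        exact star_dot_col hQ.1 x v
      rw [this]
      simp [smul_eq_mul]
    rw [e1]
    simp only [Pi.smul_apply, smul_eq_mul, one_mul]
    have hcc : star c = star s * (Q v v)⁻¹ := by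
      rw [hc, star_mul', star_inv₀, haa]
    rw [hcc, hc]
    field_simp
    ring
  have h1 := hQ.dotProduct_mulVec_nonneg y
  rw [key] at h1
  have h2 : star x ⬝ᵥ (Q - Matrix.of fun u w => Q u v * Q v w * (Q v v)⁻¹) *ᵥ x
      = star x ⬝ᵥ Q *ᵥ x - star s * s * (Q v v)⁻¹ := by
    rw [Matrix.sub_mulVec, dotProduct_sub, quad_rank_one hQ.1 v x]
  rw [h2]
  exact h1
end MatrixPart


/-- Every clique of a finite graph extends to a maximal clique. -/
lemma exists_max_clique_ext {V : Type*} [Fintype V] [DecidableEq V] (Γ : SimpleGraph V)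
    (D : Finset V) (hD : Γ.IsClique (↑D : Set V)) :
    ∃ E : Finset V, D ⊆ E ∧ Γ.IsClique (↑E : Set V) ∧
      ∀ D' : Finset V, Γ.IsClique (↑D' : Set V) → E ⊆ D' → E = D' := by
  classical
  obtain ⟨E, hEmem, hEmax⟩ := Finset.exists_max_image
    (Finset.univ.powerset.filter (fun E : Finset V => Γ.IsClique (↑E : Set V) ∧ D ⊆ E))
    Finset.card
    ⟨D, Finset.mem_filter.2 ⟨Finset.mem_powerset.2 (Finset.subset_univ _), hD, le_refl D⟩⟩
  rw [Finset.mem_filter] at hEmem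
  obtain ⟨-, hEclique, hDE⟩ := hEmem
  refine ⟨E, hDE, hEclique, fun D' hD' hED' => ?_⟩
  have hD'mem : D' ∈ Finset.univ.powerset.filter
      (fun E : Finset V => Γ.IsClique (↑E : Set V) ∧ D ⊆ E) :=
    Finset.mem_filter.2 ⟨Finset.mem_powerset.2 (Finset.subset_univ _), hD', hDE.trans hED'⟩
  exact Finset.eq_of_subset_of_card_le hED' (hEmax D' hD'mem)

/-- Main induction: decomposition of PSD matrices supported on `s` and sparse wrt `Γ`. -/
lemma mainAux {V : Type*} [Fintype V] [DecidableEq V]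
    (Γ : SimpleGraph V) (hΓ : IsChordal Γ)
    (p : ℕ) (C : Fin p → Finset V)
    (hall : ∀ D : Finset V, Γ.IsClique (D : Set V) →
      (∀ D' : Finset V, Γ.IsClique (D' : Set V) → D ⊆ D' → D = D') → ∃ k : Fin p, C k = D) :
    ∀ (n : ℕ) (s : Finset V), s.card ≤ n → ∀ Q : Matrix V V ℂ, Q.PosSemidef →
      (∀ u w : V, Q u w ≠ 0 → u ∈ s ∧ w ∈ s) →
      (∀ u w : V, u ≠ w → ¬Γ.Adj u w → Q u w = 0) →
      ∃ R : Fin p → Matrix V V ℂ, Q = ∑ k, R k ∧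
        ∀ k, (R k).PosSemidef ∧ ∀ u w : V, R k u w ≠ 0 → u ∈ C k ∧ w ∈ C k := by
  classical
  intro n
  induction n with
  | zero =>
    intro s hs Q hQ hsupp hsparse
    rw [Nat.le_zero, Finset.card_eq_zero] at hs
    subst hs
    have hQ0 : Q = 0 := by
      ext u w
      by_contra h
      exact Finset.notMem_empty u (hsupp u w h).1
    refine ⟨fun _ => 0, by simp [hQ0], fun k => ⟨Matrix.PosSemidef.zero, fun u w h => ?_⟩⟩
    simp at h
  | succ n IH =>
    intro s hs Q hQ hsupp hsparse
    rcases s.eq_empty_or_nonempty with rfl | hsne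
    · have hQ0 : Q = 0 := by
        ext u w
        by_contra h
        exact Finset.notMem_empty u (hsupp u w h).1
      refine ⟨fun _ => 0, by simp [hQ0], fun k => ⟨Matrix.PosSemidef.zero, fun u w h => ?_⟩⟩
      simp at h
    obtain ⟨v, hvs, hvsimp⟩ := diracAux hΓ s.card s le_rfl ∅ (Finset.empty_subset _)
      (by simp) (by rwa [Finset.sdiff_empty])
    rw [Finset.sdiff_empty] at hvs
    have hscard : (s.erase v).card ≤ n := by
      have := Finset.card_erase_of_mem hvs
      have hpos : 0 < s.card := Finset.card_pos.2 hsne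
      omega
    by_cases hvv : Q v v = 0
    · -- the whole row and column at v vanish
      have hcol : ∀ u, Q u v = 0 := col_eq_zero_of_diag_eq_zero hQ hvv
      have hrow : ∀ w, Q v w = 0 := by
        intro w
        have := hQ.1.apply v w
        rw [← this, hcol w]
        exact star_zero _
      refine IH (s.erase v) hscard Q hQ (fun u w h => ?_) hsparse
      have hu : u ≠ v := fun h' => h (h' ▸ hrow w)
      have hw : w ≠ v := fun h' => h (h' ▸ hcol u)
      exact ⟨Finset.mem_erase.2 ⟨hu, (hsupp u w h).1⟩,
        Finset.mem_erase.2 ⟨hw, (hsupp u w h).2⟩⟩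
    · -- split off the rank-one piece at v
      set Q1 : Matrix V V ℂ := Matrix.of fun u w => Q u v * Q v w * (Q v v)⁻¹ with hQ1def
      set Q' : Matrix V V ℂ := Q - Q1 with hQ'def
      have hQ1psd : Q1.PosSemidef := rank_one_posSemidef hQ v hvv
      have hQ'psd : Q'.PosSemidef := sub_rank_one_posSemidef hQ v hvv
      set K : Finset V := insert v (s.filter (fun u => Γ.Adj v u)) with hKdef
      have hKs : K ⊆ s := by
        rw [hKdef]
        exact Finset.insert_subset hvs (Finset.filter_subset _ _)
      have hKclique : Γ.IsClique (↑K : Set V) := by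
        rw [SimpleGraph.isClique_iff]
        intro x hx y hy hxy
        have hx' : x ∈ K := hx
        have hy' : y ∈ K := hy
        rw [hKdef, Finset.mem_insert] at hx' hy'
        rcases hx' with rfl | hx'
        · rcases hy' with rfl | hy'
          · exact absurd rfl hxy
          · exact (Finset.mem_filter.1 hy').2
        · rcases hy' with rfl | hy'
          · exact ((Finset.mem_filter.1 hx').2).symm
          · exact hvsimp x y (Finset.mem_of_mem_filter _ hx') (Finset.mem_of_mem_filter _ hy')
              (Finset.mem_filter.1 hx').2 (Finset.mem_filter.1 hy').2 hxy
      have hQ1supp : ∀ u w : V, Q1 u w ≠ 0 → u ∈ K ∧ w ∈ K := by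
        intro u w h
        rw [hQ1def] at h
        simp only [Matrix.of_apply] at h
        have huv : Q u v ≠ 0 := fun h' => h (by rw [h']; ring)
        have hvw : Q v w ≠ 0 := fun h' => h (by rw [h']; ring)
        constructor
        · by_cases huv' : u = v
          · rw [hKdef, huv']; exact Finset.mem_insert_self _ _
          · have hus : u ∈ s := (hsupp u v huv).1
            have hadj : Γ.Adj v u := by
              by_contra hnadj
              exact huv (hsparse u v huv' (fun h' => hnadj h'.symm))
            rw [hKdef]
            exact Finset.mem_insert_of_mem (Finset.mem_filter.2 ⟨hus, hadj⟩)
        · by_cases hwv : w = v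
          · rw [hKdef, hwv]; exact Finset.mem_insert_self _ _
          · have hws : w ∈ s := (hsupp v w hvw).2
            have hadj : Γ.Adj v w := by
              by_contra hnadj
              exact hvw (hsparse v w (fun h' => hwv h'.symm) hnadj)
            rw [hKdef]
            exact Finset.mem_insert_of_mem (Finset.mem_filter.2 ⟨hws, hadj⟩)
      obtain ⟨E, hKE, hEclique, hEmax⟩ := exists_max_clique_ext Γ K hKclique
      obtain ⟨k₀, hk₀⟩ := hall E hEclique hEmax
      -- Q' is supported on s.erase v and sparse
      have hQ'row : ∀ w, Q' v w = 0 := by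
        intro w
        rw [hQ'def, Matrix.sub_apply, hQ1def]
        simp only [Matrix.of_apply]
        field_simp
        ring
      have hQ'col : ∀ u, Q' u v = 0 := by
        intro u
        rw [hQ'def, Matrix.sub_apply, hQ1def]
        simp only [Matrix.of_apply]
        field_simp
        ring
      have hQ'supp : ∀ u w : V, Q' u w ≠ 0 → u ∈ s.erase v ∧ w ∈ s.erase v := by
        intro u w h
        have hone : Q u w ≠ 0 ∨ Q1 u w ≠ 0 := by
          by_contra hcon
          push_neg at hcon
          exact h (by rw [hQ'def, Matrix.sub_apply, hcon.1, hcon.2, sub_zero])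
        have hune : u ≠ v := fun h' => h (h' ▸ hQ'row w)
        have hwne : w ≠ v := fun h' => h (h' ▸ hQ'col u)
        rcases hone with h1 | h1
        · exact ⟨Finset.mem_erase.2 ⟨hune, (hsupp u w h1).1⟩,
            Finset.mem_erase.2 ⟨hwne, (hsupp u w h1).2⟩⟩
        · obtain ⟨hu, hw⟩ := hQ1supp u w h1
          exact ⟨Finset.mem_erase.2 ⟨hune, hKs hu⟩, Finset.mem_erase.2 ⟨hwne, hKs hw⟩⟩
      have hQ'sparse : ∀ u w : V, u ≠ w → ¬Γ.Adj u w → Q' u w = 0 := by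
        intro u w hne hnadj
        have h1 : Q u w = 0 := hsparse u w hne hnadj
        have h2 : Q1 u w = 0 := by
          by_contra h2
          obtain ⟨hu, hw⟩ := hQ1supp u w h2
          exact hnadj (hKclique hu hw hne)
        rw [hQ'def, Matrix.sub_apply, h1, h2, sub_zero]
      obtain ⟨R', hR'sum, hR'props⟩ := IH (s.erase v) hscard Q' hQ'psd hQ'supp hQ'sparse
      refine ⟨fun k => R' k + if k = k₀ then Q1 else 0, ?_, ?_⟩
      · rw [Finset.sum_add_distrib, ← hR'sum, Finset.sum_ite_eq' Finset.univ k₀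
          (fun _ => Q1), if_pos (Finset.mem_univ _)]
        rw [hQ'def]
        abel
      · intro k
        constructor
        · refine (hR'props k).1.add ?_
          by_cases hk : k = k₀
          · rw [if_pos hk]; exact hQ1psd
          · rw [if_neg hk]; exact Matrix.PosSemidef.zero
        · intro u w h
          have hone : R' k u w ≠ 0 ∨ (k = k₀ ∧ Q1 u w ≠ 0) := by
            by_cases hk : k = k₀
            · by_cases hR : R' k u w = 0
              · refine Or.inr ⟨hk, fun h1 => h ?_⟩
                simp [Matrix.add_apply, hR, if_pos hk, h1]
              · exact Or.inl hR
            · refine Or.inl (fun hR => h ?_)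
              simp [Matrix.add_apply, hR, if_neg hk]
          rcases hone with h1 | ⟨rfl, h1⟩
          · exact (hR'props k).2 u w h1
          · obtain ⟨hu, hw⟩ := hQ1supp u w h1
            rw [hk₀]
            exact ⟨hKE hu, hKE hw⟩

end ChordalAux

/-- Clique decomposition of positive semidefinite matrices with chordal sparsity pattern:
`Q = ∑ₖ Qₖ` with each `Qₖ` positive semidefinite and supported on the maximal clique `Cₖ`. -/
theorem chordal_psd_clique_decomposition
    {V : Type*} [Fintype V] [DecidableEq V]
    (Γ : SimpleGraph V) (hΓ : IsChordal Γ)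
    (p : ℕ) (C : Fin p → Finset V)
    (hclique : ∀ k : Fin p, Γ.IsClique (C k : Set V) ∧
      ∀ D : Finset V, Γ.IsClique (D : Set V) → C k ⊆ D → C k = D)
    (hall : ∀ D : Finset V, Γ.IsClique (D : Set V) →
      (∀ D' : Finset V, Γ.IsClique (D' : Set V) → D ⊆ D' → D = D') → ∃ k : Fin p, C k = D)
    (Q : Matrix V V ℂ) (hQ : Q.PosSemidef)
    (hsparse : ∀ u w : V, u ≠ w → ¬Γ.Adj u w → Q u w = 0) :
    ∃ Qk : Fin p → Matrix V V ℂ,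
      Q = ∑ k : Fin p, Qk k ∧
      ∀ k : Fin p, (Qk k).PosSemidef ∧
        ∀ u w : V, Qk k u w ≠ 0 → u ∈ C k ∧ w ∈ C k := by
  obtain ⟨R, hsum, hprops⟩ := ChordalAux.mainAux Γ hΓ p C hall
    (Finset.univ.card) Finset.univ le_rfl Q hQ
    (fun u w _ => ⟨Finset.mem_univ u, Finset.mem_univ w⟩) hsparse
  exact ⟨R, hsum, hprops⟩
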